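/- Let f be a function of bounded α-variation on an interval J of finite length L, with 0 < α ≤ 1 and V = V_α(f;J). Then for each j ∈ ℕ there exists a dyadic partition m of J (obtainable by recursive halving) with |m| ≤ c₁(α)·2^j intervals such that the best piecewise-constant L²-approximation of f on m satisfies inf_{t∈S̄_m} ‖f − t‖₂ ≤ c₂(α)·L^{1/2}·V·2^{−jα}, where c₁(α) = (1 − 2^{−[1/(2α)+1]})/(1 − 2^{−1/(2α)}) ∈ (1, 2.21) and c₂(α) = [2^{1+2α}(1 − 2^{−[1/(2α)+1]})^{1−2α}/(1 − 2^{−1/(2α)})]^{1/2} ∈ (√2, 6.51). -/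

import Mathlib

open Real MeasureTheory

/-- The set of sums `∑ |f(x_{k+1}) − f(x_k)|^r` over finite increasing sequences in `I`. -/
def varSums (r : ℝ) (f : ℝ → ℝ) (I : Set ℝ) : Set ℝ :=
  {v | ∃ (i : ℕ) (x : ℕ → ℝ), (∀ k, k ≤ i → x k ∈ I) ∧ (∀ k, k < i → x k < x (k + 1)) ∧
    v = ∑ k ∈ Finset.range i, |f (x (k + 1)) - f (x k)| ^ r}

/-- The `α`-variation `V_α(f; I) = (sup ∑ |f(x_j) − f(x_{j−1})|^{1/α})^α`. -/
noncomputable def alphaVar (α : ℝ) (f : ℝ → ℝ) (I : Set ℝ) : ℝ :=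
  (sSup (varSums (1 / α) f I)) ^ α

/-- The dyadic partition of `[a,b)` associated to a complete binary tree, by recursive
halving. -/
noncomputable def dyadicParts : BinaryTree Unit → ℝ → ℝ → List (ℝ × ℝ)
  | BinaryTree.nil, a, b => [(a, b)]
  | BinaryTree.node _ l r, a, b => dyadicParts l a ((a + b) / 2) ++ dyadicParts r ((a + b) / 2) b

namespace Stmt12

variable {r : ℝ} {f : ℝ → ℝ} {I : Set ℝ}

lemma varSums_nonneg {v : ℝ} (hv : v ∈ varSums r f I) : 0 ≤ v := by
  obtain ⟨i, x, -, -, rfl⟩ := hv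
  exact Finset.sum_nonneg fun k _ => Real.rpow_nonneg (abs_nonneg _) r

lemma zero_mem_varSums {y : ℝ} (hy : y ∈ I) : (0:ℝ) ∈ varSums r f I :=
  ⟨0, fun _ => y, fun k hk => hy, fun k hk => absurd hk (Nat.not_lt_zero k), by simp⟩

lemma varSums_mono {I' : Set ℝ} (h : I ⊆ I') : varSums r f I ⊆ varSums r f I' := by
  rintro v ⟨i, x, hx, hmono, rfl⟩
  exact ⟨i, x, fun k hk => h (hx k hk), hmono, rfl⟩

lemma pair_mem_varSums {x y : ℝ} (hx : x ∈ I) (hy : y ∈ I) (hxy : x < y) :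
    |f y - f x| ^ r ∈ varSums r f I := by
  refine ⟨1, fun k => if k = 0 then x else y, ?_, ?_, by simp⟩
  · intro k hk
    by_cases h : k = 0 <;> simp [h, hx, hy]
  · intro k hk
    interval_cases k
    simp [hxy]

/-- sup of varSums over `[a,b)`, the quantity `W`. -/
noncomputable def Wf (α : ℝ) (f : ℝ → ℝ) (a b : ℝ) : ℝ := sSup (varSums (1/α) f (Set.Ico a b))

lemma Wf_nonneg {α a b : ℝ} (hab : a < b) (hbdd : BddAbove (varSums (1/α) f (Set.Ico a b))) :
    0 ≤ Wf α f a b :=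
  le_csSup hbdd (zero_mem_varSums (Set.mem_Ico.2 ⟨le_rfl, hab⟩))

lemma Wf_mono {α a b a' b' : ℝ} (ha : a' ≤ a) (hb : b ≤ b') (hab : a < b)
    (hbdd : BddAbove (varSums (1/α) f (Set.Ico a' b'))) :
    Wf α f a b ≤ Wf α f a' b' := by
  exact csSup_le_csSup hbdd ⟨0, zero_mem_varSums (Set.mem_Ico.2 ⟨le_rfl, hab⟩)⟩
    (varSums_mono (Set.Ico_subset_Ico ha hb))

lemma bddAbove_sub {α a b a' b' : ℝ} (ha : a' ≤ a) (hb : b ≤ b')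
    (hbdd : BddAbove (varSums (1/α) f (Set.Ico a' b'))) :
    BddAbove (varSums (1/α) f (Set.Ico a b)) :=
  hbdd.mono (varSums_mono (Set.Ico_subset_Ico ha hb))

/-- pointwise oscillation bound: `|f y - f x| ≤ (Wf a b)^α`. -/
lemma abs_sub_le_rpow {α a b x y : ℝ} (hα : 0 < α)
    (hbdd : BddAbove (varSums (1/α) f (Set.Ico a b)))
    (hx : x ∈ Set.Ico a b) (hy : y ∈ Set.Ico a b) :
    |f y - f x| ≤ (Wf α f a b) ^ α := by
  have hW0 : 0 ≤ Wf α f a b := Wf_nonneg (lt_of_le_of_lt hx.1 hx.2) hbdd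
  rcases lt_trichotomy x y with h | h | h
  · have hm := le_csSup hbdd (pair_mem_varSums (f := f) hx hy h)
    calc |f y - f x| = |f y - f x| ^ ((1/α)*α) := by
          rw [one_div, inv_mul_cancel₀ (ne_of_gt hα), Real.rpow_one]
      _ = (|f y - f x| ^ (1/α)) ^ α := Real.rpow_mul (abs_nonneg _) _ _
      _ ≤ (Wf α f a b) ^ α := by
          exact Real.rpow_le_rpow (Real.rpow_nonneg (abs_nonneg _) _) hm (le_of_lt hα)
  · simp [h, Real.rpow_nonneg hW0]
  · have hm := le_csSup hbdd (pair_mem_varSums (f := f) hy hx h)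
    rw [← abs_sub_comm]
    calc |f x - f y| = |f x - f y| ^ ((1/α)*α) := by
          rw [one_div, inv_mul_cancel₀ (ne_of_gt hα), Real.rpow_one]
      _ = (|f x - f y| ^ (1/α)) ^ α := Real.rpow_mul (abs_nonneg _) _ _
      _ ≤ (Wf α f a b) ^ α := by
          exact Real.rpow_le_rpow (Real.rpow_nonneg (abs_nonneg _) _) hm (le_of_lt hα)


lemma Wf_superadd {α a m b : ℝ} (ham : a < m) (hmb : m < b)
    (hbdd : BddAbove (varSums (1/α) f (Set.Ico a b))) :
    Wf α f a m + Wf α f m b ≤ Wf α f a b := by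
  set r := 1/α
  have hbdd1 : BddAbove (varSums r f (Set.Ico a m)) :=
    hbdd.mono (varSums_mono (Set.Ico_subset_Ico le_rfl (le_of_lt hmb)))
  have hbdd2 : BddAbove (varSums r f (Set.Ico m b)) :=
    hbdd.mono (varSums_mono (Set.Ico_subset_Ico (le_of_lt ham) le_rfl))
  have hne1 : (varSums r f (Set.Ico a m)).Nonempty :=
    ⟨0, zero_mem_varSums (Set.mem_Ico.2 ⟨le_rfl, ham⟩)⟩
  have hne2 : (varSums r f (Set.Ico m b)).Nonempty :=
    ⟨0, zero_mem_varSums (Set.mem_Ico.2 ⟨le_rfl, hmb⟩)⟩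
  have key : ∀ u ∈ varSums r f (Set.Ico a m), ∀ v ∈ varSums r f (Set.Ico m b),
      u + v ≤ Wf α f a b := by
    rintro u ⟨i, x, hxmem, hxmono, rfl⟩ v ⟨i', y, hymem, hymono, rfl⟩
    set z : ℕ → ℝ := fun k => if k ≤ i then x k else y (k - (i+1)) with hz
    set N := i + (1 + i') with hN
    have hzmem : ∀ k, k ≤ N → z k ∈ Set.Ico a b := by
      intro k hk
      by_cases h : k ≤ i
      · have := hxmem k h
        simp only [hz, if_pos h]
        exact ⟨this.1, lt_trans this.2 hmb⟩
      · have h2 : k - (i+1) ≤ i' := by omega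
        have := hymem _ h2
        simp only [hz, if_neg h]
        exact ⟨le_trans (le_of_lt ham) this.1, this.2⟩
    have hzmono : ∀ k, k < N → z k < z (k+1) := by
      intro k hk
      rcases lt_trichotomy k i with h | h | h
      · simp only [hz, if_pos (le_of_lt h), if_pos (Nat.succ_le_of_lt h)]
        exact hxmono k h
      · subst h
        simp only [hz, if_pos le_rfl, if_neg (by omega : ¬ k + 1 ≤ k)]
        have h0 : k + 1 - (k+1) = 0 := by omega
        rw [h0]
        exact lt_of_lt_of_le (hxmem k le_rfl).2 (hymem 0 (Nat.zero_le _)).1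
      · simp only [hz, if_neg (by omega : ¬ k ≤ i), if_neg (by omega : ¬ k + 1 ≤ i)]
        have h1 : k + 1 - (i+1) = (k - (i+1)) + 1 := by omega
        rw [h1]
        exact hymono _ (by omega)
    have hmem : (∑ k ∈ Finset.range N, |f (z (k + 1)) - f (z k)| ^ r) ∈
        varSums r f (Set.Ico a b) := ⟨N, z, hzmem, hzmono, rfl⟩
    refine le_trans ?_ (le_csSup hbdd hmem)
    have hsplit : ∑ k ∈ Finset.range N, |f (z (k + 1)) - f (z k)| ^ r
        = (∑ k ∈ Finset.range i, |f (z (k + 1)) - f (z k)| ^ r)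
          + ∑ k ∈ Finset.range (1 + i'), |f (z (i + k + 1)) - f (z (i + k))| ^ r := by
      rw [hN, Finset.sum_range_add]
    rw [hsplit]
    have e1 : ∑ k ∈ Finset.range i, |f (z (k + 1)) - f (z k)| ^ r
        = ∑ k ∈ Finset.range i, |f (x (k + 1)) - f (x k)| ^ r := by
      refine Finset.sum_congr rfl fun k hk => ?_
      simp only [Finset.mem_range] at hk
      simp only [hz, if_pos (by omega : k ≤ i), if_pos (by omega : k + 1 ≤ i)]
    have e2 : ∑ k ∈ Finset.range (1 + i'), |f (z (i + k + 1)) - f (z (i + k))| ^ r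
        = |f (z (i+1)) - f (z i)| ^ r
          + ∑ k ∈ Finset.range i', |f (y (k + 1)) - f (y k)| ^ r := by
      rw [(by omega : 1 + i' = i' + 1), Finset.sum_range_succ']
      rw [add_comm]
      congr 1
      refine Finset.sum_congr rfl fun k hk => ?_
      simp only [Finset.mem_range] at hk
      have h1 : ¬ (i + (k+1) + 1 ≤ i) := by omega
      have h2 : ¬ (i + (k+1) ≤ i) := by omega
      simp only [hz, if_neg h1, if_neg h2,
        (by omega : i + (k+1) + 1 - (i+1) = k+1), (by omega : i + (k+1) - (i+1) = k)]
    rw [e1, e2]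
    have : (0:ℝ) ≤ |f (z (i+1)) - f (z i)| ^ r := Real.rpow_nonneg (abs_nonneg _) r
    linarith
  have h2 : Wf α f m b ≤ Wf α f a b - Wf α f a m := by
    refine csSup_le hne2 fun v hv => ?_
    rw [le_sub_iff_add_le]
    have : Wf α f a m ≤ Wf α f a b - v := by
      refine csSup_le hne1 fun u hu => ?_
      have := key u hu v hv
      linarith
    linarith
  linarith

open Classical in
noncomputable def bt (α : ℝ) (f : ℝ → ℝ) (w : ℕ → ℝ) : ℕ → ℕ → ℝ → ℝ → BinaryTree Unit
  | 0, _, _, _ => BinaryTree.nil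
  | (n+1), k, a, b =>
    if w k < Wf α f a b then
      BinaryTree.node () (bt α f w n (k+1) a ((a+b)/2)) (bt α f w n (k+1) ((a+b)/2) b)
    else BinaryTree.nil

noncomputable def gfun (f : ℝ → ℝ) : BinaryTree Unit → ℝ → ℝ → ℝ → ℝ
  | BinaryTree.nil, a, _b, _y => f a
  | BinaryTree.node _ l r, a, b, y =>
      if y < (a+b)/2 then gfun f l a ((a+b)/2) y else gfun f r ((a+b)/2) b y

lemma dyadicParts_sub {t : BinaryTree Unit} : ∀ {a b : ℝ}, a ≤ b → ∀ pq ∈ dyadicParts t a b,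
    a ≤ pq.1 ∧ pq.1 ≤ pq.2 ∧ pq.2 ≤ b := by
  induction t with
  | nil =>
    intro a b hab pq hpq
    simp only [dyadicParts, List.mem_singleton] at hpq
    subst hpq; exact ⟨le_rfl, hab, le_rfl⟩
  | node _ l r ihl ihr =>
    intro a b hab pq hpq
    have ham : a ≤ (a+b)/2 := by linarith
    have hmb : (a+b)/2 ≤ b := by linarith
    simp only [dyadicParts, List.mem_append] at hpq
    rcases hpq with h | h
    · obtain ⟨h1, h2, h3⟩ := ihl ham pq h
      exact ⟨h1, h2, le_trans h3 hmb⟩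
    · obtain ⟨h1, h2, h3⟩ := ihr hmb pq h
      exact ⟨le_trans ham h1, h2, h3⟩

lemma gfun_eq {f : ℝ → ℝ} {t : BinaryTree Unit} : ∀ {a b : ℝ}, a ≤ b → ∀ pq ∈ dyadicParts t a b,
    ∀ y ∈ Set.Ico pq.1 pq.2, gfun f t a b y = f pq.1 := by
  induction t with
  | nil =>
    intro a b hab pq hpq y hy
    simp only [dyadicParts, List.mem_singleton] at hpq
    subst hpq; rfl
  | node _ l r ihl ihr =>
    intro a b hab pq hpq y hy
    have ham : a ≤ (a+b)/2 := by linarith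
    have hmb : (a+b)/2 ≤ b := by linarith
    simp only [dyadicParts, List.mem_append] at hpq
    rcases hpq with h | h
    · have hsub := dyadicParts_sub ham pq h
      have hym : y < (a+b)/2 := lt_of_lt_of_le hy.2 hsub.2.2
      simp only [gfun, if_pos hym]
      exact ihl ham pq h y hy
    · have hsub := dyadicParts_sub hmb pq h
      have hym : ¬ y < (a+b)/2 := not_lt.2 (le_trans hsub.1 hy.1)
      simp only [gfun, if_neg hym]
      exact ihr hmb pq h y hy

lemma leaf_integral {f : ℝ → ℝ} {α a b : ℝ} (hα : 0 < α) (hf : Measurable f) (hab : a < b)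
    (hbdd : BddAbove (varSums (1/α) f (Set.Ico a b))) :
    IntegrableOn (fun y => (f y - f a) ^ 2) (Set.Ico a b) volume ∧
    ∫ y in Set.Ico a b, (f y - f a) ^ 2 ≤ (b - a) * (Wf α f a b) ^ (2*α) := by
  have hW0 : 0 ≤ Wf α f a b := Wf_nonneg hab hbdd
  have hC : ((Wf α f a b) ^ α) ^ 2 = (Wf α f a b) ^ (2*α) := by
    rw [← Real.rpow_natCast ((Wf α f a b) ^ α) 2, ← Real.rpow_mul hW0]
    norm_num [mul_comm]
  have hbound : ∀ y ∈ Set.Ico a b, (f y - f a) ^ 2 ≤ (Wf α f a b) ^ (2*α) := by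
    intro y hy
    rw [← hC, ← sq_abs]
    have h1 := abs_sub_le_rpow hα hbdd (Set.mem_Ico.2 ⟨le_rfl, hab⟩) hy
    exact pow_le_pow_left₀ (abs_nonneg _) h1 2
  have hmeas : Measurable fun y => (f y - f a) ^ 2 := (hf.sub measurable_const).pow_const 2
  have hint : IntegrableOn (fun y => (f y - f a) ^ 2) (Set.Ico a b) volume := by
    refine Measure.integrableOn_of_bounded (M := (Wf α f a b) ^ (2*α)) ?_ hmeas.aestronglyMeasurable ?_
    · simp [Real.volume_Ico]
    · filter_upwards [ae_restrict_mem measurableSet_Ico] with y hy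
      rw [Real.norm_eq_abs, abs_of_nonneg (sq_nonneg _)]
      exact hbound y hy
  refine ⟨hint, ?_⟩
  have hmono := MeasureTheory.setIntegral_mono_on hint
    (integrableOn_const (by simp [Real.volume_Ico])) measurableSet_Ico hbound
  calc ∫ y in Set.Ico a b, (f y - f a) ^ 2 ≤ ∫ _ in Set.Ico a b, (Wf α f a b) ^ (2*α) := hmono
    _ = (b - a) * (Wf α f a b) ^ (2*α) := by
      simp [Real.volume_Ico, ENNReal.toReal_ofReal (by linarith : (0:ℝ) ≤ b - a), mul_comm, hab.le]

lemma master (α : ℝ) (hα : 0 < α) (f : ℝ → ℝ) (hf : Measurable f) (c d : ℝ)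
    (hbdd : BddAbove (varSums (1/α) f (Set.Ico c d)))
    (w C D A B : ℕ → ℝ) (j : ℕ)
    (hwlow : ∀ k, k < j → w k < 0)
    (hwtop : Wf α f c d ≤ w (3*j+1))
    (hD0 : ∀ k, 0 ≤ D k) (hB0 : ∀ k, 0 ≤ B k)
    (hleafC : ∀ k, 1 ≤ C k)
    (hleafE : ∀ k, j ≤ k → ∀ w', 0 ≤ w' → w' ≤ w k →
        (d - c)/2^k * w' ^ (2*α) ≤ A k + B k * w')
    (hsplitlowC : ∀ k, k < j → 2 * C (k+1) ≤ C k ∧ D (k+1) ≤ D k)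
    (hsplitlowE : ∀ k, k < j → 2 * A (k+1) ≤ A k ∧ B (k+1) ≤ B k)
    (hsplithigh : ∀ k, j ≤ k → k ≤ 3*j → ∀ w', w k < w' →
        (2 * C (k+1) + D (k+1) * w' ≤ C k + D k * w') ∧
        (2 * A (k+1) + B (k+1) * w' ≤ A k + B k * w')) :
    ∀ n k a b, n + k = 3*j + 1 → c ≤ a → a < b → b ≤ d → b - a = (d - c)/2^k →
      (((dyadicParts (bt α f w n k a b) a b).length : ℝ) ≤ C k + D k * Wf α f a b) ∧
      IntegrableOn (fun y => (f y - gfun f (bt α f w n k a b) a b y)^2) (Set.Ico a b) volume ∧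
      (∫ y in Set.Ico a b, (f y - gfun f (bt α f w n k a b) a b y)^2
        ≤ A k + B k * Wf α f a b) := by
  -- leaf case helper
  have leaf_case : ∀ k a b, j ≤ k → c ≤ a → a < b → b ≤ d → b - a = (d - c)/2^k →
      Wf α f a b ≤ w k →
      ((1:ℝ) ≤ C k + D k * Wf α f a b) ∧
      IntegrableOn (fun y => (f y - f a)^2) (Set.Ico a b) volume ∧
      (∫ y in Set.Ico a b, (f y - f a)^2 ≤ A k + B k * Wf α f a b) := by
    intro k a b hjk hca hab hbd hlen hWw
    have hbdd' : BddAbove (varSums (1/α) f (Set.Ico a b)) := bddAbove_sub hca hbd hbdd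
    have hW0 : 0 ≤ Wf α f a b := Wf_nonneg hab hbdd'
    obtain ⟨hint, hest⟩ := leaf_integral hα hf hab hbdd'
    refine ⟨?_, hint, ?_⟩
    · have := mul_nonneg (hD0 k) hW0
      linarith [hleafC k]
    · rw [hlen] at hest
      exact le_trans hest (hleafE k hjk _ hW0 hWw)
  intro n
  induction n with
  | zero =>
    intro k a b hnk hca hab hbd hlen
    have hk : k = 3*j+1 := by omega
    have hbdd' : BddAbove (varSums (1/α) f (Set.Ico a b)) := bddAbove_sub hca hbd hbdd
    have hWle : Wf α f a b ≤ w k := by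
      rw [hk]
      exact le_trans (Wf_mono hca hbd hab hbdd) hwtop
    obtain ⟨h1, h2, h3⟩ := leaf_case k a b (by omega) hca hab hbd hlen hWle
    exact ⟨by simpa [bt, dyadicParts] using h1, by simpa [bt, gfun] using h2,
      by simpa [bt, gfun] using h3⟩
  | succ n ih =>
    intro k a b hnk hca hab hbd hlen
    have hbdd' : BddAbove (varSums (1/α) f (Set.Ico a b)) := bddAbove_sub hca hbd hbdd
    have hW0 : 0 ≤ Wf α f a b := Wf_nonneg hab hbdd'
    by_cases hsp : w k < Wf α f a b
    · -- split case
      set m := (a+b)/2 with hm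
      have ham : a < m := by rw [hm]; linarith
      have hmb : m < b := by rw [hm]; linarith
      have hlen1 : m - a = (d - c)/2^(k+1) := by
        calc m - a = (b - a)/2 := by rw [hm]; ring
          _ = (d - c)/2^k/2 := by rw [hlen]
          _ = (d - c)/2^(k+1) := by rw [div_div, ← pow_succ]
      have hlen2 : b - m = (d - c)/2^(k+1) := by
        calc b - m = (b - a)/2 := by rw [hm]; ring
          _ = (d - c)/2^k/2 := by rw [hlen]
          _ = (d - c)/2^(k+1) := by rw [div_div, ← pow_succ]
      obtain ⟨hlC, hlI, hlE⟩ := ih (k+1) a m (by omega) hca ham (le_trans hmb.le hbd) hlen1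
      obtain ⟨hrC, hrI, hrE⟩ := ih (k+1) m b (by omega) (le_trans hca ham.le) hmb hbd hlen2
      have hsuper : Wf α f a m + Wf α f m b ≤ Wf α f a b := Wf_superadd ham hmb hbdd'
      have hWl0 : 0 ≤ Wf α f a m := Wf_nonneg ham (bddAbove_sub le_rfl hmb.le hbdd')
      have hWr0 : 0 ≤ Wf α f m b := Wf_nonneg hmb (bddAbove_sub ham.le le_rfl hbdd')
      have hkj : k ≤ 3*j := by omega
      -- the tree and g unfold
      have hbt : bt α f w (n+1) k a b
          = BinaryTree.node () (bt α f w n (k+1) a m) (bt α f w n (k+1) m b) := by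
        rw [bt, if_pos hsp]
      -- potentials step
      have hstepC : 2 * C (k+1) + D (k+1) * Wf α f a b ≤ C k + D k * Wf α f a b := by
        rcases lt_or_ge k j with h | h
        · obtain ⟨h1, h2⟩ := hsplitlowC k h
          nlinarith [hD0 (k+1), hW0]
        · exact (hsplithigh k h hkj _ hsp).1
      have hstepE : 2 * A (k+1) + B (k+1) * Wf α f a b ≤ A k + B k * Wf α f a b := by
        rcases lt_or_ge k j with h | h
        · obtain ⟨h1, h2⟩ := hsplitlowE k h
          nlinarith [hB0 (k+1), hW0]
        · exact (hsplithigh k h hkj _ hsp).2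
      -- g agreement on halves
      have hEqL : Set.EqOn (fun y => (f y - gfun f (bt α f w n (k+1) a m) a m y)^2)
          (fun y => (f y - gfun f (bt α f w (n+1) k a b) a b y)^2) (Set.Ico a m) := by
        intro y hy
        simp only [hbt, gfun, ← hm, if_pos (show y < m from hy.2)]
      have hEqR : Set.EqOn (fun y => (f y - gfun f (bt α f w n (k+1) m b) m b y)^2)
          (fun y => (f y - gfun f (bt α f w (n+1) k a b) a b y)^2) (Set.Ico m b) := by
        intro y hy
        simp only [hbt, gfun, ← hm, if_neg (show ¬ y < m from not_lt.2 hy.1)]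
      have hIL : IntegrableOn (fun y => (f y - gfun f (bt α f w (n+1) k a b) a b y)^2)
          (Set.Ico a m) volume := (hlI.congr_fun hEqL measurableSet_Ico)
      have hIR : IntegrableOn (fun y => (f y - gfun f (bt α f w (n+1) k a b) a b y)^2)
          (Set.Ico m b) volume := (hrI.congr_fun hEqR measurableSet_Ico)
      have hunion : Set.Ico a m ∪ Set.Ico m b = Set.Ico a b :=
        Set.Ico_union_Ico_eq_Ico ham.le hmb.le
      constructor
      · -- counting
        have hlp : (dyadicParts (bt α f w (n+1) k a b) a b).length
            = (dyadicParts (bt α f w n (k+1) a m) a m).length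
              + (dyadicParts (bt α f w n (k+1) m b) m b).length := by
          rw [hbt]
          simp [dyadicParts, ← hm]
        rw [hlp]
        push_cast
        have hDmul : D (k+1) * Wf α f a m + D (k+1) * Wf α f m b
            ≤ D (k+1) * Wf α f a b := by
          rw [← mul_add]
          exact mul_le_mul_of_nonneg_left hsuper (hD0 (k+1))
        linarith
      constructor
      · rw [← hunion]
        exact hIL.union hIR
      · rw [← hunion]
        rw [MeasureTheory.setIntegral_union (Set.Ico_disjoint_Ico_same)
          measurableSet_Ico hIL hIR]
        have e1 : ∫ y in Set.Ico a m, (f y - gfun f (bt α f w (n+1) k a b) a b y)^2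
            = ∫ y in Set.Ico a m, (f y - gfun f (bt α f w n (k+1) a m) a m y)^2 :=
          (MeasureTheory.setIntegral_congr_fun measurableSet_Ico hEqL).symm
        have e2 : ∫ y in Set.Ico m b, (f y - gfun f (bt α f w (n+1) k a b) a b y)^2
            = ∫ y in Set.Ico m b, (f y - gfun f (bt α f w n (k+1) m b) m b y)^2 :=
          (MeasureTheory.setIntegral_congr_fun measurableSet_Ico hEqR).symm
        rw [e1, e2]
        have hBmul : B (k+1) * Wf α f a m + B (k+1) * Wf α f m b
            ≤ B (k+1) * Wf α f a b := by
          rw [← mul_add]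
          exact mul_le_mul_of_nonneg_left hsuper (hB0 (k+1))
        linarith
    · -- leaf case
      have hjk : j ≤ k := by
        by_contra h
        exact hsp (lt_of_lt_of_le (hwlow k (by omega)) hW0)
      have hbtnil : bt α f w (n+1) k a b = BinaryTree.nil := by
        rw [bt, if_neg hsp]
      obtain ⟨h1, h2, h3⟩ := leaf_case k a b hjk hca hab hbd hlen (not_lt.1 hsp)
      exact ⟨by simpa [hbtnil, dyadicParts] using h1, by simpa [hbtnil, gfun] using h2,
        by simpa [hbtnil, gfun] using h3⟩

/-- `β ≤ 2^β` for `β > 0`. -/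
lemma self_le_two_rpow {β : ℝ} (hβ : 0 < β) : β ≤ (2:ℝ) ^ β := by
  have hl2 : (0:ℝ) < Real.log 2 := Real.log_pos one_lt_two
  have h1 : β * Real.log 2 ≤ Real.exp (β * Real.log 2 - 1) := by
    have := Real.add_one_le_exp (β * Real.log 2 - 1)
    linarith
  have h2 : Real.exp (β * Real.log 2 - 1) = (2:ℝ) ^ β / Real.exp 1 := by
    rw [Real.exp_sub, Real.rpow_def_of_pos two_pos, mul_comm]
  have he : (1:ℝ) < Real.exp 1 * Real.log 2 := by
    nlinarith [Real.exp_one_gt_d9, Real.log_two_gt_d9]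
  have h3 : (0:ℝ) < Real.exp 1 := Real.exp_pos 1
  rw [h2] at h1
  have h4 : β * (Real.exp 1 * Real.log 2) ≤ (2:ℝ) ^ β := by
    rw [div_eq_mul_inv] at h1
    calc β * (Real.exp 1 * Real.log 2) = (β * Real.log 2) * Real.exp 1 := by ring
      _ ≤ ((2:ℝ)^β * (Real.exp 1)⁻¹) * Real.exp 1 := by
          exact mul_le_mul_of_nonneg_right h1 h3.le
      _ = (2:ℝ)^β := by field_simp
  nlinarith [Real.rpow_pos_of_pos two_pos β]

/-- `x = 2^{-β} ≤ 1/β = 2α` where `β = 1/(2α)`. -/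
lemma x_le_two_alpha {α : ℝ} (hα : 0 < α) :
    (2:ℝ) ^ (-(1/(2*α))) ≤ 2*α := by
  set β := 1/(2*α) with hβdef
  have hβ : 0 < β := by positivity
  have h1 : β ≤ (2:ℝ)^β := self_le_two_rpow hβ
  have h2 : (2:ℝ)^(-β) = ((2:ℝ)^β)⁻¹ := Real.rpow_neg two_pos.le β
  rw [h2]
  have h3 : ((2:ℝ)^β)⁻¹ ≤ β⁻¹ := by
    exact inv_anti₀ hβ h1
  have h4 : β⁻¹ = 2*α := by
    rw [hβdef]
    field_simp
  linarith

lemma geom_tail_le {x : ℝ} (hx0 : 0 < x) (hx1 : x < 1) (N : ℕ) :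
    ∑ i ∈ Finset.range N, x ^ (i+1) ≤ x / (1-x) := by
  have h1 : ∑ i ∈ Finset.range N, x ^ (i+1) = x * ∑ i ∈ Finset.range N, x ^ i := by
    rw [Finset.mul_sum]
    exact Finset.sum_congr rfl fun i _ => by ring
  have h2 : ∑ i ∈ Finset.range N, x ^ i = (x ^ N - 1)/(x - 1) := geom_sum_eq (by linarith) N
  have h3 : (0:ℝ) ≤ x ^ N := pow_nonneg hx0.le N
  rw [h1, h2]
  have h1x : (0:ℝ) < 1 - x := by linarith
  have e : x * ((x ^ N - 1) / (x - 1)) = x * (1 - x^N) / (1-x) := by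
    have hne1 : x - (1:ℝ) ≠ 0 := by linarith
    have hne2 : (1:ℝ) - x ≠ 0 := by linarith
    field_simp
    ring
  rw [e]
  exact (div_le_div_iff_of_pos_right h1x).2 (by nlinarith)

/-- exponent normal form -/
lemma exp_form {L X e cc : ℝ} (hX : 0 < X) (m : ℕ) :
    (L / 2^m) * (X * (2:ℝ)^e)^cc = L * X^cc * (2:ℝ)^(e*cc - (m:ℝ)) := by
  rw [Real.mul_rpow hX.le (Real.rpow_nonneg two_pos.le _),
    ← Real.rpow_natCast (2:ℝ) m, ← Real.rpow_mul two_pos.le, Real.rpow_sub two_pos]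
  ring

/-- Young-type pointwise bound. -/
lemma young {α w' s : ℝ} (hα : 0 < α) (hw' : 0 ≤ w') (hs : 0 < s) (h : w' ≤ s) :
    w' ^ (2*α) ≤ max 0 (1-2*α) * s^(2*α) + s^(2*α-1) * w' := by
  have hs2α : 0 ≤ s ^ (2*α) := Real.rpow_nonneg hs.le _
  have hs2α1 : 0 ≤ s ^ (2*α-1) := Real.rpow_nonneg hs.le _
  have hm0 : 0 ≤ max 0 (1-2*α) := le_max_left _ _
  rcases le_or_gt 1 (2*α) with hc | hc
  · -- 2α ≥ 1
    have key : w' ^ (2*α) ≤ s^(2*α-1) * w' := by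
      rcases eq_or_lt_of_le hw' with h0 | h0
      · rw [← h0, Real.zero_rpow (by positivity : 2*α ≠ 0)]
        positivity
      · have e1 : w' ^ (2*α) = w' ^ (2*α-1) * w' := by
          calc w' ^ (2*α) = w' ^ (2*α-1+1) := by norm_num
            _ = w' ^ (2*α-1) * w' := by rw [Real.rpow_add h0, Real.rpow_one]
        rw [e1]
        have : w' ^ (2*α-1) ≤ s ^ (2*α-1) :=
          Real.rpow_le_rpow hw' h (by linarith)
        exact mul_le_mul_of_nonneg_right this hw'
    nlinarith
  · -- 2α < 1
    have hm : max 0 (1-2*α) = 1-2*α := max_eq_right (by linarith)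
    rw [hm]
    set y := w' / s with hy
    have hy0 : 0 ≤ y := by positivity
    have hy1 : y ≤ 1 := by rw [hy, div_le_one hs]; exact h
    have hgm : y ^ (2*α) * (1:ℝ) ^ (1-2*α) ≤ (2*α) * y + (1-2*α) * 1 :=
      Real.geom_mean_le_arith_mean2_weighted (by linarith) (by linarith) hy0
        zero_le_one (by ring)
    rw [Real.one_rpow, mul_one, mul_one] at hgm
    have hw's : w' = s * y := by rw [hy]; field_simp
    have e2 : w' ^ (2*α) = s ^ (2*α) * y ^ (2*α) := by
      rw [hw's, Real.mul_rpow hs.le hy0]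
    have e3 : s ^ (2*α) * y = s ^ (2*α-1) * w' := by
      rw [hw's]
      have : s ^ (2*α - 1) * s = s ^ (2*α) := by
        calc s ^ (2*α-1) * s = s ^ (2*α-1) * s ^ (1:ℝ) := by rw [Real.rpow_one]
          _ = s ^ (2*α-1+1) := (Real.rpow_add hs _ _).symm
          _ = s ^ (2*α) := by norm_num
      calc s ^ (2*α) * y = (s^(2*α-1) * s) * y := by rw [this]
        _ = s ^ (2*α-1) * (s * y) := by ring
    have hy2α : y ^ (2*α) ≤ (2*α)*y + (1-2*α) := hgm
    have h2αy : (2*α) * y ≤ y := by nlinarith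
    calc w' ^ (2*α) = s ^ (2*α) * y ^ (2*α) := e2
      _ ≤ s ^ (2*α) * (y + (1-2*α)) := by
          apply mul_le_mul_of_nonneg_left _ hs2α
          linarith
      _ = (1-2*α) * s^(2*α) + (s^(2*α) * y) := by ring
      _ = (1-2*α) * s^(2*α) + s^(2*α-1) * w' := by rw [e3]

/-- final arithmetic comparison -/
lemma final_arith {α x : ℝ} (hα : 0 < α) (hα1 : α ≤ 1) (hx0 : 0 < x) (hx1 : x < 1)
    (hx2a : x ≤ 2*α) :
    max 0 (1-2*α) + max 0 (1-2*α) * x/(2*(1-x)) + x/2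
      ≤ (1-x/2)^(1-2*α) / (1-x) := by
  have hb0 : 0 < 1 - x/2 := by linarith
  have hb1 : 1 - x/2 ≤ 1 := by linarith
  have h1x : 0 < 1 - x := by linarith
  rcases le_or_gt 1 (2*α) with hc | hc
  · have hm : max 0 (1-2*α) = 0 := max_eq_left (by linarith)
    rw [hm]
    have hq : 1 ≤ (1-x/2)^(1-2*α) :=
      Real.one_le_rpow_of_pos_of_le_one_of_nonpos hb0 hb1 (by linarith)
    rw [le_div_iff₀ h1x]
    have h2 : (0 + 0 * x / (2 * (1 - x)) + x / 2) * (1 - x) = x*(1-x)/2 := by ring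
    rw [h2]
    have h3 : x*(1-x) ≤ 1 := by nlinarith
    linarith [hq]
  · have hm : max 0 (1-2*α) = 1-2*α := max_eq_right (by linarith)
    rw [hm]
    have hq : 1 - x/2 ≤ (1-x/2)^(1-2*α) := by
      have := Real.rpow_le_rpow_of_exponent_ge hb0 hb1 (by linarith : 1-2*α ≤ 1)
      rwa [Real.rpow_one] at this
    rw [le_div_iff₀ h1x]
    have e : ((1-2*α) + (1-2*α)*x/(2*(1-x)) + x/2)*(1-x)
        = (1-2*α)*(1-x) + (1-2*α)*x/2 + x*(1-x)/2 := by
      field_simp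
    rw [e]
    nlinarith [hq, hx2a, mul_pos hx0 h1x]


noncomputable def wpos (X β : ℝ) (j k : ℕ) : ℝ :=
  X * (2:ℝ) ^ (1 + ((k:ℝ) - (j:ℝ) + 1)*β - (j:ℝ))
noncomputable def wseq (X β : ℝ) (j k : ℕ) : ℝ := if k < j then -1 else wpos X β j k
noncomputable def Cseq (j k : ℕ) : ℝ := 2 ^ (j - k)
noncomputable def Dseq (X β : ℝ) (j k : ℕ) : ℝ :=
  ∑ i ∈ Finset.range (3*j + 1 - max k j), (wpos X β j (max k j + i))⁻¹
noncomputable def astar (L X α : ℝ) (j : ℕ) : ℝ :=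
  max 0 (1-2*α) * (L * X ^ (2*α) * (2:ℝ) ^ (1 + 2*α - (j:ℝ) - 2*(j:ℝ)*α))
noncomputable def bbseq (L X α β : ℝ) (j k : ℕ) : ℝ :=
  (L / 2^k) * (wpos X β j k) ^ (2*α-1)
noncomputable def Aseq (L X α : ℝ) (j k : ℕ) : ℝ := astar L X α j * 2 ^ (j - k)
noncomputable def Bseq (L X α β : ℝ) (j k : ℕ) : ℝ :=
  bbseq L X α β j (max k j) + astar L X α j * Dseq X β j k

section facts
variable {α β X L : ℝ} {j : ℕ}

lemma wpos_pos (hX : 0 < X) (k : ℕ) : 0 < wpos X β j k := by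
  unfold wpos; positivity

lemma Dseq_nonneg (hX : 0 < X) (k : ℕ) : 0 ≤ Dseq X β j k :=
  Finset.sum_nonneg fun i _ => (inv_nonneg).2 (wpos_pos hX _).le

lemma astar_nonneg (hL : 0 ≤ L) (hX : 0 < X) : 0 ≤ astar L X α j := by
  unfold astar
  have h2 : (0:ℝ) ≤ X ^ (2*α) := Real.rpow_nonneg hX.le _
  have h3 : (0:ℝ) ≤ (2:ℝ) ^ (1 + 2*α - (j:ℝ) - 2*(j:ℝ)*α) := (Real.rpow_pos_of_pos two_pos _).le
  exact mul_nonneg (le_max_left _ _) (mul_nonneg (mul_nonneg hL h2) h3)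

lemma bbseq_nonneg (hL : 0 ≤ L) (hX : 0 < X) (k : ℕ) : 0 ≤ bbseq L X α β j k := by
  unfold bbseq
  have := (wpos_pos (β := β) (j := j) hX k)
  positivity

lemma Bseq_nonneg (hL : 0 ≤ L) (hX : 0 < X) (k : ℕ) : 0 ≤ Bseq L X α β j k :=
  add_nonneg (bbseq_nonneg hL hX _) (mul_nonneg (astar_nonneg hL hX) (Dseq_nonneg hX k))

lemma Cseq_ge_one (k : ℕ) : 1 ≤ Cseq j k := one_le_pow₀ (by norm_num : (1:ℝ) ≤ 2)

lemma Cseq_succ_lt {k : ℕ} (h : k < j) : 2 * Cseq j (k+1) = Cseq j k := by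
  unfold Cseq
  rw [show j - k = (j-(k+1))+1 from by omega, pow_succ]
  ring

lemma Dseq_succ_lt {k : ℕ} (h : k < j) : Dseq X β j (k+1) = Dseq X β j k := by
  unfold Dseq
  rw [max_eq_right (by omega : k+1 ≤ j), max_eq_right (by omega : k ≤ j)]

lemma Dseq_succ_ge {k : ℕ} (h1 : j ≤ k) (h2 : k ≤ 3*j) :
    Dseq X β j k = (wpos X β j k)⁻¹ + Dseq X β j (k+1) := by
  unfold Dseq
  rw [max_eq_left (by omega : j ≤ k), max_eq_left (by omega : j ≤ k+1)]
  rw [show 3*j+1-k = (3*j-k)+1 from by omega, Finset.sum_range_succ',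
    show 3*j+1-(k+1) = 3*j-k from by omega]
  have hsum : ∑ i ∈ Finset.range (3*j-k), (wpos X β j (k + (i+1)))⁻¹
      = ∑ i ∈ Finset.range (3*j-k), (wpos X β j ((k+1) + i))⁻¹ :=
    Finset.sum_congr rfl fun i _ => by rw [show k + (i+1) = (k+1)+i from by omega]
  rw [hsum]
  simp only [Nat.add_zero]
  ring

lemma Aseq_succ_lt {k : ℕ} (h : k < j) : 2 * Aseq L X α j (k+1) = Aseq L X α j k := by
  unfold Aseq
  rw [show j - k = (j-(k+1))+1 from by omega, pow_succ]
  ring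

lemma Aseq_ge {k : ℕ} (h : j ≤ k) : Aseq L X α j k = astar L X α j := by
  unfold Aseq
  rw [show j - k = 0 from by omega, pow_zero, mul_one]

lemma bbseq_eq (hX : 0 < X) (k : ℕ) : bbseq L X α β j k
    = L * X^(2*α-1) * (2:ℝ)^((1 + ((k:ℝ) - (j:ℝ) + 1)*β - (j:ℝ))*(2*α-1) - (k:ℝ)) :=
  exp_form hX k

lemma bbseq_mono (hα : 0 < α) (hL : 0 ≤ L) (hX : 0 < X) (hβ0 : 0 < β)
    (hβ2α : β * (2*α) = 1) (k : ℕ) : bbseq L X α β j (k+1) ≤ bbseq L X α β j k := by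
  rw [bbseq_eq hX, bbseq_eq hX]
  have hexp : (1 + (((k+1:ℕ):ℝ) - (j:ℝ) + 1)*β - (j:ℝ))*(2*α-1) - ((k+1:ℕ):ℝ)
      ≤ (1 + ((k:ℝ) - (j:ℝ) + 1)*β - (j:ℝ))*(2*α-1) - (k:ℝ) := by
    push_cast
    nlinarith [hβ0, hβ2α]
  have hbase : (2:ℝ)^((1 + (((k+1:ℕ):ℝ) - (j:ℝ) + 1)*β - (j:ℝ))*(2*α-1) - ((k+1:ℕ):ℝ))
      ≤ (2:ℝ)^((1 + ((k:ℝ) - (j:ℝ) + 1)*β - (j:ℝ))*(2*α-1) - (k:ℝ)) :=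
    Real.rpow_le_rpow_of_exponent_le one_le_two hexp
  have hc : 0 ≤ L * X^(2*α-1) := mul_nonneg hL (Real.rpow_nonneg hX.le _)
  exact mul_le_mul_of_nonneg_left hbase hc

lemma leaf_key (hα : 0 < α) (hL : 0 ≤ L) (hX : 0 < X) (hβ2α : β * (2*α) = 1)
    {k : ℕ} (hjk : j ≤ k) {w' : ℝ} (hw'0 : 0 ≤ w') (hw' : w' ≤ wpos X β j k) :
    L/2^k * w'^(2*α) ≤ Aseq L X α j k + Bseq L X α β j k * w' := by
  have hs := wpos_pos (β := β) (j := j) hX k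
  have hy := young hα hw'0 hs hw'
  have hL2 : (0:ℝ) ≤ L / 2^k := by positivity
  have step1 : L/2^k * w'^(2*α)
      ≤ max 0 (1-2*α) * (L/2^k * (wpos X β j k)^(2*α)) + bbseq L X α β j k * w' := by
    have := mul_le_mul_of_nonneg_left hy hL2
    unfold bbseq
    nlinarith [this]
  have e1 : L/2^k * (wpos X β j k)^(2*α)
      = L * X^(2*α) * (2:ℝ)^((1 + ((k:ℝ) - (j:ℝ) + 1)*β - (j:ℝ))*(2*α) - (k:ℝ)) :=
    exp_form hX k
  have e2 : (1 + ((k:ℝ) - (j:ℝ) + 1)*β - (j:ℝ))*(2*α) - (k:ℝ)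
      = 1 + 2*α - (j:ℝ) - 2*(j:ℝ)*α := by
    linear_combination ((k:ℝ) - (j:ℝ) + 1) * hβ2α
  have e3 : max 0 (1-2*α) * (L/2^k * (wpos X β j k)^(2*α)) = astar L X α j := by
    rw [e1, e2]; rfl
  rw [e3] at step1
  have hA : astar L X α j = Aseq L X α j k := (Aseq_ge hjk).symm
  have hB : bbseq L X α β j k * w' ≤ Bseq L X α β j k * w' := by
    have hBb : bbseq L X α β j k ≤ Bseq L X α β j k := by
      unfold Bseq
      rw [max_eq_left hjk]
      exact le_add_of_nonneg_right (mul_nonneg (astar_nonneg hL hX) (Dseq_nonneg hX k))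
    exact mul_le_mul_of_nonneg_right hBb hw'0
  rw [hA] at step1
  linarith

lemma wpos_top (hα : 0 < α) (hα1 : α ≤ 1) (hX : 0 ≤ X) (hβ : β = 1/(2*α)) :
    X ≤ wpos X β j (3*j+1) := by
  have hβhalf : (1:ℝ)/2 ≤ β := by
    rw [hβ]
    rw [div_le_div_iff₀ (by norm_num) (by positivity)]
    linarith
  have hE : (0:ℝ) ≤ 1 + (((3*j+1:ℕ):ℝ) - (j:ℝ) + 1)*β - (j:ℝ) := by
    push_cast
    nlinarith [hβhalf]
  have h1 : (1:ℝ) ≤ (2:ℝ)^(1 + (((3*j+1:ℕ):ℝ) - (j:ℝ) + 1)*β - (j:ℝ)) := by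
    calc (1:ℝ) = (2:ℝ)^(0:ℝ) := (Real.rpow_zero 2).symm
      _ ≤ _ := Real.rpow_le_rpow_of_exponent_le one_le_two hE
  calc X = X * 1 := (mul_one X).symm
    _ ≤ wpos X β j (3*j+1) := mul_le_mul_of_nonneg_left h1 hX

lemma Dsum_root (hX : 0 < X) (hβ0 : 0 < β)
    (hx1 : (2:ℝ)^(-β) < 1) :
    Dseq X β j 0 * X ≤ (2:ℝ)^j * ((2:ℝ)^(-β)/2) / (1-(2:ℝ)^(-β)) := by
  set x := (2:ℝ)^(-β) with hxdef
  have hx0 : 0 < x := Real.rpow_pos_of_pos two_pos _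
  have e0 : Dseq X β j 0 = ∑ i ∈ Finset.range (2*j+1), (wpos X β j (j + i))⁻¹ := by
    unfold Dseq
    rw [max_eq_right (Nat.zero_le j), show 3*j+1-j = 2*j+1 from by omega]
  have e1 : ∀ i : ℕ, (wpos X β j (j + i))⁻¹ * X = (2:ℝ)^((j:ℝ)-1) * x^(i+1) := by
    intro i
    have hw := wpos_pos (β := β) (j := j) hX (j+i)
    have e2 : (wpos X β j (j+i))⁻¹ * X
        = ((2:ℝ)^(1 + (((j+i:ℕ):ℝ) - (j:ℝ) + 1)*β - (j:ℝ)))⁻¹ := by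
      unfold wpos
      rw [mul_inv]
      field_simp
    rw [e2]
    rw [← Real.rpow_neg two_pos.le]
    have e3 : -(1 + (((j+i:ℕ):ℝ) - (j:ℝ) + 1)*β - (j:ℝ)) = ((j:ℝ)-1) + (-β * ((i:ℝ)+1)) := by
      push_cast
      ring
    rw [e3, Real.rpow_add two_pos]
    congr 1
    rw [Real.rpow_mul two_pos.le]
    rw [show ((i:ℝ)+1) = ((i+1:ℕ):ℝ) from by push_cast; ring]
    rw [Real.rpow_natCast]
  have e4 : Dseq X β j 0 * X = (2:ℝ)^((j:ℝ)-1) * ∑ i ∈ Finset.range (2*j+1), x^(i+1) := by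
    rw [e0, Finset.sum_mul, Finset.mul_sum]
    exact Finset.sum_congr rfl fun i _ => e1 i
  rw [e4]
  have hgeom := geom_tail_le hx0 hx1 (2*j+1)
  have h2j : (0:ℝ) < (2:ℝ)^((j:ℝ)-1) := Real.rpow_pos_of_pos two_pos _
  have e5 : (2:ℝ)^((j:ℝ)-1) = (2:ℝ)^(j:ℕ) / 2 := by
    rw [Real.rpow_sub two_pos, Real.rpow_one, Real.rpow_natCast]
  calc (2:ℝ)^((j:ℝ)-1) * ∑ i ∈ Finset.range (2*j+1), x^(i+1)
      ≤ (2:ℝ)^((j:ℝ)-1) * (x/(1-x)) := mul_le_mul_of_nonneg_left hgeom h2j.le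
    _ = (2:ℝ)^(j:ℕ) * (x/2) / (1-x) := by rw [e5]; ring

end facts
section root
variable {α β X L : ℝ} {j : ℕ}

lemma x_facts (hβ0 : 0 < β) : 0 < (2:ℝ)^(-β) ∧ (2:ℝ)^(-β) < 1 :=
  ⟨Real.rpow_pos_of_pos two_pos _,
   Real.rpow_lt_one_of_one_lt_of_neg one_lt_two (by linarith)⟩

lemma count_root (hX : 0 < X) (hβ0 : 0 < β) :
    Cseq j 0 + Dseq X β j 0 * X
      ≤ (1 - (2:ℝ)^(-β)/2)/(1 - (2:ℝ)^(-β)) * 2^j := by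
  obtain ⟨hx0, hx1⟩ := x_facts (β := β) hβ0
  set x := (2:ℝ)^(-β)
  have hD := Dsum_root (j := j) hX hβ0 hx1
  have hC : Cseq j 0 = 2^j := by unfold Cseq; rw [Nat.sub_zero]
  have h1x : (0:ℝ) < 1 - x := by linarith
  have e : (1 - x/2)/(1-x) * 2^j = 2^j + (2:ℝ)^j * (x/2) / (1-x) := by
    field_simp
    ring
  rw [hC, e]
  linarith

lemma error_root (hα : 0 < α) (hα1 : α ≤ 1) (hL : 0 ≤ L) (hX : 0 < X)
    (hβ : β = 1/(2*α)) :
    Aseq L X α j 0 + Bseq L X α β j 0 * X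
      ≤ (2:ℝ)^(1+2*α) * (1-(2:ℝ)^(-β)/2)^(1-2*α) / (1-(2:ℝ)^(-β))
        * (L * X^(2*α) * (2:ℝ)^(-(2*(j:ℝ)*α))) := by
  have hβ0 : 0 < β := by rw [hβ]; positivity
  have hβ2α : β * (2*α) = 1 := by rw [hβ]; field_simp
  obtain ⟨hx0, hx1⟩ := x_facts (β := β) hβ0
  set x := (2:ℝ)^(-β) with hxdef
  have hx2a : x ≤ 2*α := by rw [hxdef, hβ]; exact x_le_two_alpha hα
  have h1x : (0:ℝ) < 1 - x := by linarith
  set T := L * X^(2*α) * (2:ℝ)^(-(2*(j:ℝ)*α)) with hTdef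
  have hT0 : 0 ≤ T := by
    rw [hTdef]
    have := Real.rpow_nonneg hX.le (2*α)
    positivity
  set m₀ := max 0 (1-2*α) with hm₀
  have hm₀0 : 0 ≤ m₀ := le_max_left _ _
  set P := (2:ℝ)^(1+2*α) with hPdef
  have hP0 : 0 < P := Real.rpow_pos_of_pos two_pos _
  -- key1 : astar * 2^j = m₀ * (P * T)
  have e1 : (2:ℝ)^(1 + 2*α - (j:ℝ) - 2*(j:ℝ)*α) * (2:ℝ)^((j:ℝ))
      = (2:ℝ)^(1+2*α) * (2:ℝ)^(-(2*(j:ℝ)*α)) := by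
    rw [← Real.rpow_add two_pos, ← Real.rpow_add two_pos]
    congr 1
    ring
  have key1 : astar L X α j * (2:ℝ)^(j:ℕ) = m₀ * (P * T) := by
    rw [← Real.rpow_natCast (2:ℝ) j]
    unfold astar
    rw [hTdef, hPdef, hm₀]
    linear_combination (max 0 (1-2*α) * (L * X^(2*α))) * e1
  -- key2 : bbseq j j * X = P * T * (x/2)
  have eX : X^(2*α-1) * X = X^(2*α) := by
    calc X^(2*α-1) * X = X^(2*α-1) * X^(1:ℝ) := by rw [Real.rpow_one]
      _ = X^(2*α-1+1) := (Real.rpow_add hX _ _).symm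
      _ = X^(2*α) := by norm_num
  have h2x : (2:ℝ)^(-1-β) = x/2 := by
    rw [show (-1-β : ℝ) = -β + (-1) from by ring, Real.rpow_add two_pos,
      Real.rpow_neg_one]
    rw [hxdef]
    ring
  have eE : (1 + (((j:ℕ):ℝ) - (j:ℝ) + 1)*β - (j:ℝ))*(2*α-1) - ((j:ℕ):ℝ)
      = (1+2*α) + (-(2*(j:ℝ)*α)) + (-1-β) := by
    linear_combination hβ2α
  have key2 : bbseq L X α β j j * X = P * T * (x/2) := by
    rw [bbseq_eq hX j, eE]
    rw [Real.rpow_add two_pos, Real.rpow_add two_pos, h2x]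
    rw [hTdef, hPdef]
    calc L * X^(2*α-1) * ((2:ℝ)^(1+2*α) * (2:ℝ)^(-(2*(j:ℝ)*α)) * (x/2)) * X
        = L * (X^(2*α-1) * X) * ((2:ℝ)^(1+2*α) * (2:ℝ)^(-(2*(j:ℝ)*α)) * (x/2)) := by ring
      _ = (2:ℝ)^(1+2*α) * (L * X^(2*α) * (2:ℝ)^(-(2*(j:ℝ)*α))) * (x/2) := by rw [eX]; ring
  -- key3 : astar * (Dseq 0 * X) ≤ m₀ * (P*T) * (x/2)/(1-x)
  have hDle := Dsum_root (j := j) hX hβ0 hx1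
  have hast := astar_nonneg (α := α) (j := j) hL hX
  have key3 : astar L X α j * (Dseq X β j 0 * X) ≤ m₀ * (P * T) * ((x/2)/(1-x)) := by
    calc astar L X α j * (Dseq X β j 0 * X)
        ≤ astar L X α j * ((2:ℝ)^j * (x/2) / (1-x)) := mul_le_mul_of_nonneg_left hDle hast
      _ = (astar L X α j * (2:ℝ)^(j:ℕ)) * ((x/2)/(1-x)) := by ring
      _ = m₀ * (P * T) * ((x/2)/(1-x)) := by rw [key1]
  -- assemble
  have hstruct : Aseq L X α j 0 + Bseq L X α β j 0 * X
      = astar L X α j * (2:ℝ)^(j:ℕ) + bbseq L X α β j j * X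
        + astar L X α j * (Dseq X β j 0 * X) := by
    unfold Aseq Bseq
    rw [Nat.sub_zero, max_eq_right (Nat.zero_le j)]
    push_cast
    ring
  have hfa := final_arith hα hα1 hx0 hx1 hx2a
  have hPT : 0 ≤ P * T := mul_nonneg hP0.le hT0
  have hmul := mul_le_mul_of_nonneg_left hfa hPT
  rw [hstruct, key1, key2]
  calc m₀ * (P*T) + P*T*(x/2) + astar L X α j * (Dseq X β j 0 * X)
      ≤ m₀ * (P*T) + P*T*(x/2) + m₀ * (P * T) * ((x/2)/(1-x)) := by linarith [key3]
    _ = P*T * (m₀ + m₀ * x/(2*(1-x)) + x/2) := by field_simp; ring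
    _ ≤ P*T * ((1-x/2)^(1-2*α) / (1-x)) := hmul
    _ = (2:ℝ)^(1+2*α) * (1-x/2)^(1-2*α) / (1-x) * T := by rw [hPdef]; ring

end root

section constants
variable {α : ℝ}

lemma const_facts (hα : 0 < α) (hα1 : α ≤ 1) :
    ∃ x : ℝ, x = (2:ℝ)^(-(1/(2*α))) ∧ 0 < x ∧ x < 1 ∧ x ≤ 0.7074 ∧
      (2:ℝ)^(-(1/(2*α)+1)) = x/2 := by
  set β := 1/(2*α) with hβ
  have hβ0 : 0 < β := by positivity
  have hβhalf : (1:ℝ)/2 ≤ β := by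
    rw [hβ, div_le_div_iff₀ (by norm_num) (by positivity)]
    linarith
  refine ⟨(2:ℝ)^(-β), rfl, Real.rpow_pos_of_pos two_pos _,
    Real.rpow_lt_one_of_one_lt_of_neg one_lt_two (by linarith), ?_, ?_⟩
  · -- x ≤ 0.7074
    set s := (2:ℝ)^(-(1/2:ℝ)) with hs
    have hxs : (2:ℝ)^(-β) ≤ s := by
      rw [hs]
      exact Real.rpow_le_rpow_of_exponent_le one_le_two (by linarith)
    have hs0 : 0 < s := Real.rpow_pos_of_pos two_pos _
    have hs2 : s^(2:ℕ) = 1/2 := by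
      rw [hs, ← Real.rpow_natCast ((2:ℝ)^(-(1/2:ℝ))) 2, ← Real.rpow_mul two_pos.le]
      norm_num [Real.rpow_neg_one]
    have hslt : s ≤ 0.7074 := by
      nlinarith [hs2, hs0]
    linarith
  · rw [show -(β+1) = -β + (-1) from by ring, Real.rpow_add two_pos, Real.rpow_neg_one]
    ring

lemma c1_bounds (hα : 0 < α) (hα1 : α ≤ 1) :
    1 < (1 - (2:ℝ)^(-(1/(2*α)+1)))/(1 - (2:ℝ)^(-(1/(2*α)))) ∧
    (1 - (2:ℝ)^(-(1/(2*α)+1)))/(1 - (2:ℝ)^(-(1/(2*α)))) < 2.21 := by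
  obtain ⟨x, hxd, hx0, hx1, hxb, hy⟩ := const_facts hα hα1
  rw [hy, ← hxd]
  have h1x : (0:ℝ) < 1 - x := by linarith
  constructor
  · rw [lt_div_iff₀ h1x]
    linarith
  · rw [div_lt_iff₀ h1x]
    nlinarith

lemma c2_bounds (hα : 0 < α) (hα1 : α ≤ 1) :
    2 < (2:ℝ)^(1+2*α) * (1 - (2:ℝ)^(-(1/(2*α)+1)))^(1-2*α) / (1 - (2:ℝ)^(-(1/(2*α)))) ∧
    (2:ℝ)^(1+2*α) * (1 - (2:ℝ)^(-(1/(2*α)+1)))^(1-2*α) / (1 - (2:ℝ)^(-(1/(2*α))))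
      < 6.51^2 := by
  obtain ⟨x, hxd, hx0, hx1, hxb, hy⟩ := const_facts hα hα1
  rw [hy, ← hxd]
  have h1x : (0:ℝ) < 1 - x := by linarith
  have hb0 : (0:ℝ) < 1 - x/2 := by linarith
  have hb1 : 1 - x/2 ≤ 1 := by linarith
  set q := (1-x/2)^(1-2*α) with hq
  have hql : 1 - x/2 ≤ q := by
    have := Real.rpow_le_rpow_of_exponent_ge hb0 hb1 (by linarith : 1-2*α ≤ 1)
    rwa [Real.rpow_one] at this
  have hqu : q ≤ (1-x/2)⁻¹ := by
    have := Real.rpow_le_rpow_of_exponent_ge hb0 hb1 (by linarith : (-1:ℝ) ≤ 1-2*α)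
    rwa [Real.rpow_neg_one] at this
  set P := (2:ℝ)^(1+2*α) with hP
  have hPl : 2 < P := by
    rw [hP]
    calc (2:ℝ) = (2:ℝ)^(1:ℝ) := (Real.rpow_one 2).symm
      _ < (2:ℝ)^(1+2*α) := Real.rpow_lt_rpow_of_exponent_lt one_lt_two (by linarith)
  have hPu : P ≤ 8 := by
    rw [hP]
    calc (2:ℝ)^(1+2*α) ≤ (2:ℝ)^(3:ℝ) :=
          Real.rpow_le_rpow_of_exponent_le one_le_two (by linarith)
      _ = 8 := by
          rw [show (3:ℝ) = ((3:ℕ):ℝ) from by norm_num, Real.rpow_natCast]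
          norm_num
  have hq0 : 0 < q := lt_of_lt_of_le hb0 hql
  constructor
  · rw [lt_div_iff₀ h1x]
    nlinarith [mul_pos (by linarith : (0:ℝ) < P - 2) hq0, hql, hx0]
  · rw [div_lt_iff₀ h1x]
    calc P * q ≤ 8 * (1-x/2)⁻¹ := mul_le_mul hPu hqu hq0.le (by norm_num)
      _ = 8 / (1-x/2) := by ring
      _ < 6.51^2 * (1-x) := by
          rw [div_lt_iff₀ hb0]
          nlinarith [hxb, hx0, sq_nonneg x, sq_nonneg (0.7074 - x)]

end constants

end Stmt12

section
open Stmt12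
/-- Proposition 3: If `f` has bounded `α`-variation `V` on an interval `J` of
length `L`, then for each `j ∈ ℕ` there is a dyadic partition `m` of `J` with
`|m| ≤ c₁(α)·2^j` on which some piecewise-constant function `g` satisfies
`‖f − g‖₂ ≤ c₂(α)·L^{1/2}·V·2^{−jα}`, where
`c₁(α) = (1 − 2^{−(1/(2α)+1)})/(1 − 2^{−1/(2α)}) ∈ (1, 2.21)` and
`c₂(α) = (2^{1+2α}(1 − 2^{−(1/(2α)+1)})^{1−2α}/(1 − 2^{−1/(2α)}))^{1/2} ∈ (√2, 6.51)`. -/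
theorem stmt_12 (α : ℝ) (hα : 0 < α) (hα1 : α ≤ 1) (c d : ℝ) (hcd : c < d)
    (f : ℝ → ℝ) (hf : Measurable f)
    (hbdd : BddAbove (varSums (1 / α) f (Set.Ico c d))) :
    (1 < (1 - (2 : ℝ) ^ (-(1 / (2 * α) + 1))) / (1 - (2 : ℝ) ^ (-(1 / (2 * α)))) ∧
     (1 - (2 : ℝ) ^ (-(1 / (2 * α) + 1))) / (1 - (2 : ℝ) ^ (-(1 / (2 * α)))) < 2.21) ∧
    (Real.sqrt 2 < Real.sqrt ((2 : ℝ) ^ (1 + 2 * α)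
        * (1 - (2 : ℝ) ^ (-(1 / (2 * α) + 1))) ^ (1 - 2 * α)
        / (1 - (2 : ℝ) ^ (-(1 / (2 * α))))) ∧
     Real.sqrt ((2 : ℝ) ^ (1 + 2 * α)
        * (1 - (2 : ℝ) ^ (-(1 / (2 * α) + 1))) ^ (1 - 2 * α)
        / (1 - (2 : ℝ) ^ (-(1 / (2 * α))))) < 6.51) ∧
    ∀ j : ℕ, ∃ t : BinaryTree Unit,
      ((dyadicParts t c d).length : ℝ)
          ≤ (1 - (2 : ℝ) ^ (-(1 / (2 * α) + 1))) / (1 - (2 : ℝ) ^ (-(1 / (2 * α))))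
            * 2 ^ j ∧
      ∃ g : ℝ → ℝ,
        (∀ pq ∈ dyadicParts t c d, ∃ const : ℝ, ∀ y ∈ Set.Ico pq.1 pq.2, g y = const) ∧
        Real.sqrt (∫ y in Set.Ico c d, (f y - g y) ^ 2)
          ≤ Real.sqrt ((2 : ℝ) ^ (1 + 2 * α)
              * (1 - (2 : ℝ) ^ (-(1 / (2 * α) + 1))) ^ (1 - 2 * α)
              / (1 - (2 : ℝ) ^ (-(1 / (2 * α)))))
            * Real.sqrt (d - c) * alphaVar α f (Set.Ico c d)
            * (2 : ℝ) ^ (-(j : ℝ) * α) := by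
  have hc1 := c1_bounds hα hα1
  have hc2 := c2_bounds hα hα1
  obtain ⟨x, hxd, hx0, hx1, hxb, hxy⟩ := const_facts hα hα1
  refine ⟨hc1, ⟨Real.sqrt_lt_sqrt (by norm_num) hc2.1, (Real.sqrt_lt' (by norm_num)).2 hc2.2⟩, ?_⟩
  intro j
  set X := Wf α f c d with hXdef
  have hX0 : 0 ≤ X := Wf_nonneg hcd hbdd
  have hαV : alphaVar α f (Set.Ico c d) = X ^ α := rfl
  rcases eq_or_lt_of_le hX0 with hX | hX
  · -- X = 0 : f is a.e. constant on [c,d)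
    refine ⟨BinaryTree.nil, ?_, fun _ => f c, ?_, ?_⟩
    · have h2j : (1:ℝ) ≤ 2^j := one_le_pow₀ (by norm_num)
      have : ((dyadicParts BinaryTree.nil c d).length : ℝ) = 1 := by
        simp [dyadicParts]
      rw [this]
      nlinarith [hc1.1]
    · intro pq hpq
      refine ⟨f c, fun y hy => rfl⟩
    · have hzero : ∀ y ∈ Set.Ico c d, (f y - f c)^2 = 0 := by
        intro y hy
        have h1 := abs_sub_le_rpow hα hbdd (Set.mem_Ico.2 ⟨le_rfl, hcd⟩) hy
        rw [← hXdef, ← hX, Real.zero_rpow (ne_of_gt hα)] at h1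
        have : f y - f c = 0 := by
          have := abs_nonneg (f y - f c)
          have heq : |f y - f c| = 0 := le_antisymm h1 this
          exact abs_eq_zero.1 heq
        rw [this]
        ring
      have hint0 : ∫ y in Set.Ico c d, (f y - f c)^2 = 0 := by
        rw [MeasureTheory.setIntegral_congr_fun measurableSet_Ico hzero]
        simp
      rw [hint0, Real.sqrt_zero, hαV, ← hX, Real.zero_rpow (ne_of_gt hα)]
      simp
  · -- X > 0
    set β := 1/(2*α) with hβdef
    have hβ0 : 0 < β := by rw [hβdef]; positivity
    have hβ2α : β * (2*α) = 1 := by rw [hβdef]; field_simp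
    set L := d - c with hLdef
    have hL : 0 < L := by rw [hLdef]; linarith
    -- verify master hypotheses
    have hwlow : ∀ k, k < j → wseq X β j k < 0 := by
      intro k hk
      rw [wseq, if_pos hk]
      norm_num
    have hwtop : Wf α f c d ≤ wseq X β j (3*j+1) := by
      rw [wseq, if_neg (by omega : ¬ 3*j+1 < j)]
      exact wpos_top hα hα1 hX0 hβdef
    have hD0 : ∀ k, 0 ≤ Dseq X β j k := fun k => Dseq_nonneg hX k
    have hB0 : ∀ k, 0 ≤ Bseq L X α β j k := fun k => Bseq_nonneg hL.le hX k
    have hleafC : ∀ k, 1 ≤ Cseq j k := fun k => Cseq_ge_one k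
    have hleafE : ∀ k, j ≤ k → ∀ w', 0 ≤ w' → w' ≤ wseq X β j k →
        (d-c)/2^k * w'^(2*α) ≤ Aseq L X α j k + Bseq L X α β j k * w' := by
      intro k hjk w' hw'0 hw'
      rw [wseq, if_neg (by omega : ¬ k < j)] at hw'
      rw [← hLdef]
      exact leaf_key hα hL.le hX hβ2α hjk hw'0 hw'
    have hsplitlowC : ∀ k, k < j →
        2 * Cseq j (k+1) ≤ Cseq j k ∧ Dseq X β j (k+1) ≤ Dseq X β j k :=
      fun k hk => ⟨le_of_eq (Cseq_succ_lt hk), le_of_eq (Dseq_succ_lt hk)⟩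
    have hBseq_lt : ∀ k, k < j → Bseq L X α β j (k+1) = Bseq L X α β j k := by
      intro k hk
      unfold Bseq
      rw [max_eq_right (by omega : k+1 ≤ j), max_eq_right (by omega : k ≤ j),
        Dseq_succ_lt hk]
    have hsplitlowE : ∀ k, k < j →
        2 * Aseq L X α j (k+1) ≤ Aseq L X α j k ∧ Bseq L X α β j (k+1) ≤ Bseq L X α β j k :=
      fun k hk => ⟨le_of_eq (Aseq_succ_lt hk), le_of_eq (hBseq_lt k hk)⟩
    have hCeq : ∀ k, j ≤ k → Cseq j k = 1 := by
      intro k hk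
      unfold Cseq
      rw [show j - k = 0 from by omega, pow_zero]
    have hsplithigh : ∀ k, j ≤ k → k ≤ 3*j → ∀ w', wseq X β j k < w' →
        (2 * Cseq j (k+1) + Dseq X β j (k+1) * w' ≤ Cseq j k + Dseq X β j k * w') ∧
        (2 * Aseq L X α j (k+1) + Bseq L X α β j (k+1) * w'
          ≤ Aseq L X α j k + Bseq L X α β j k * w') := by
      intro k hjk hk3j w' hsp
      rw [wseq, if_neg (by omega : ¬ k < j)] at hsp
      have hw := wpos_pos (β := β) (j := j) hX k
      have hw'0 : 0 < w' := lt_trans hw hsp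
      have hone : 1 ≤ (wpos X β j k)⁻¹ * w' := by
        rw [← div_eq_inv_mul]
        exact (one_le_div hw).2 hsp.le
      have hDrec : Dseq X β j k = (wpos X β j k)⁻¹ + Dseq X β j (k+1) :=
        Dseq_succ_ge hjk hk3j
      constructor
      · rw [hCeq k hjk, hCeq (k+1) (by omega), hDrec]
        nlinarith [hone]
      · rw [Aseq_ge hjk, Aseq_ge (by omega : j ≤ k+1)]
        have hBk : Bseq L X α β j k
            = bbseq L X α β j k + astar L X α j * ((wpos X β j k)⁻¹ + Dseq X β j (k+1)) := by
          unfold Bseq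
          rw [max_eq_left hjk, hDrec]
        have hBk1 : Bseq L X α β j (k+1)
            = bbseq L X α β j (k+1) + astar L X α j * Dseq X β j (k+1) := by
          unfold Bseq
          rw [max_eq_left (by omega : j ≤ k+1)]
        rw [hBk, hBk1]
        have hbbm := bbseq_mono (L := L) (j := j) hα hL.le hX hβ0 hβ2α k
        have hast := astar_nonneg (α := α) (j := j) hL.le hX
        have h1 : astar L X α j ≤ astar L X α j * ((wpos X β j k)⁻¹ * w') :=
          le_mul_of_one_le_right hast hone
        have h2 : bbseq L X α β j (k+1) * w' ≤ bbseq L X α β j k * w' :=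
          mul_le_mul_of_nonneg_right hbbm hw'0.le
        nlinarith [h1, h2]
    have hres := master α hα f hf c d hbdd (wseq X β j) (Cseq j) (Dseq X β j)
      (Aseq L X α j) (Bseq L X α β j) j hwlow hwtop hD0 hB0 hleafC hleafE
      hsplitlowC hsplitlowE hsplithigh (3*j+1) 0 c d (by omega) le_rfl hcd le_rfl
      (by rw [pow_zero, div_one])
    obtain ⟨hcount, hintg, herr⟩ := hres
    set t := bt α f (wseq X β j) (3*j+1) 0 c d with htdef
    refine ⟨t, ?_, gfun f t c d, ?_, ?_⟩
    · -- counting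
      calc ((dyadicParts t c d).length : ℝ)
          ≤ Cseq j 0 + Dseq X β j 0 * Wf α f c d := hcount
        _ ≤ (1 - (2:ℝ)^(-β)/2)/(1 - (2:ℝ)^(-β)) * 2^j := count_root hX hβ0
        _ = (1 - (2:ℝ)^(-(β+1)))/(1 - (2:ℝ)^(-β)) * 2^j := by
            rw [hxy, hxd]
    · intro pq hpq
      exact ⟨f pq.1, fun y hy => gfun_eq (le_of_lt hcd) pq hpq y hy⟩
    · -- error
      have hbound : ∫ y in Set.Ico c d, (f y - gfun f t c d y)^2
          ≤ (2:ℝ)^(1+2*α) * (1-(2:ℝ)^(-β)/2)^(1-2*α) / (1-(2:ℝ)^(-β))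
            * (L * X^(2*α) * (2:ℝ)^(-(2*(j:ℝ)*α))) :=
        le_trans herr (error_root hα hα1 hL.le hX hβdef)
      set E := (2:ℝ)^(1+2*α) * (1-(2:ℝ)^(-β)/2)^(1-2*α) / (1-(2:ℝ)^(-β)) with hEdef
      have hE0 : 0 ≤ E := by
        rw [hEdef]
        have hxx1 : (2:ℝ)^(-β) < 1 :=
          Real.rpow_lt_one_of_one_lt_of_neg one_lt_two (by linarith)
        have h1 : (0:ℝ) < 1 - (2:ℝ)^(-β) := by linarith
        have h2 : (0:ℝ) ≤ (2:ℝ)^(1+2*α) := (Real.rpow_pos_of_pos two_pos _).le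
        have h3 : (0:ℝ) ≤ (1-(2:ℝ)^(-β)/2)^(1-2*α) := by
          apply Real.rpow_nonneg
          have := Real.rpow_pos_of_pos (two_pos (α := ℝ)) (-β)
          linarith
        positivity
      have hsq1 : Real.sqrt (X^(2*α)) = X^α := by
        rw [Real.sqrt_eq_rpow, ← Real.rpow_mul hX0]
        congr 1
        ring
      have hsq2 : Real.sqrt ((2:ℝ)^(-(2*(j:ℝ)*α))) = (2:ℝ)^(-(j:ℝ)*α) := by
        rw [Real.sqrt_eq_rpow, ← Real.rpow_mul two_pos.le]
        congr 1
        ring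
      have hsplit : Real.sqrt (E * (L * X^(2*α) * (2:ℝ)^(-(2*(j:ℝ)*α))))
          = Real.sqrt E * Real.sqrt L * (X^α) * (2:ℝ)^(-(j:ℝ)*α) := by
        rw [Real.sqrt_mul hE0,
          Real.sqrt_mul (mul_nonneg hL.le (Real.rpow_nonneg hX0 _)),
          Real.sqrt_mul hL.le, hsq1, hsq2]
        ring
      calc Real.sqrt (∫ y in Set.Ico c d, (f y - gfun f t c d y)^2)
          ≤ Real.sqrt (E * (L * X^(2*α) * (2:ℝ)^(-(2*(j:ℝ)*α)))) :=
            Real.sqrt_le_sqrt hbound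
        _ = Real.sqrt E * Real.sqrt L * (X^α) * (2:ℝ)^(-(j:ℝ)*α) := hsplit
        _ = Real.sqrt ((2:ℝ)^(1+2*α) * (1 - (2:ℝ)^(-(β+1)))^(1-2*α) / (1 - (2:ℝ)^(-β)))
            * Real.sqrt L * alphaVar α f (Set.Ico c d) * (2:ℝ)^(-(j:ℝ)*α) := by
            rw [hαV, hEdef, hxy, hxd]

end
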